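/- Let ℝⁿ = ℝ^{n₁}×ℝ^{n₂}, let 𝒮_x, 𝒮_y be bases of shapes in ℝ^{n₁}, ℝ^{n₂} respectively, and let 𝒮 have the strong decomposition property with respect to {𝒮_x, 𝒮_y}. If f ∈ BMO_𝒮(ℝⁿ), then f ∈ BMO_{rec,𝒮}(ℝ^{n₁}×ℝ^{n₂}) with ‖f‖_{BMO_{rec,𝒮}} ≤ 3‖f‖_{BMO_𝒮}. -/

import Mathlib

open MeasureTheory Set ENNReal

noncomputable section

/-- A shape: an open set of finite positive Lebesgue measure. -/
def IsShape {α : Type*} [TopologicalSpace α] [MeasureSpace α] (S : Set α) : Prop :=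
  IsOpen S ∧ 0 < volume S ∧ volume S < ⊤

/-- A basis of shapes: a collection of shapes covering the space. -/
def IsShapeBasis {α : Type*} [TopologicalSpace α] [MeasureSpace α] (𝒮 : Set (Set α)) : Prop :=
  (∀ S ∈ 𝒮, IsShape S) ∧ ⋃₀ 𝒮 = Set.univ

/-- `𝒮` has the strong decomposition property with respect to `{𝒮x, 𝒮y}`. -/
def StrongDecomposition2 {A B : Type*} (𝒮 : Set (Set (A × B)))
    (𝒮x : Set (Set A)) (𝒮y : Set (Set B)) : Prop :=
  (∀ S ∈ 𝒮, ∃ S₁ ∈ 𝒮x, ∃ S₂ ∈ 𝒮y, S = S₁ ×ˢ S₂) ∧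
  (∀ S₁ ∈ 𝒮x, ∀ S₂ ∈ 𝒮y, S₁ ×ˢ S₂ ∈ 𝒮)

/-- The rectangular BMO norm of `f` with respect to the bases `𝒮x, 𝒮y`:
`sup_{S₁ ∈ 𝒮x, S₂ ∈ 𝒮y} ⨍_{S₁} ⨍_{S₂} |f(x,y) − (f_x)_{S₂} − (f_y)_{S₁} + f_{S₁×S₂}|`. -/
def recBmoNorm {A B : Type*} [MeasureSpace A] [MeasureSpace B]
    [SigmaFinite (volume : Measure A)] [SigmaFinite (volume : Measure B)]
    (𝒮x : Set (Set A)) (𝒮y : Set (Set B)) (f : A × B → ℝ) : ℝ≥0∞ :=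
  ⨆ S₁ ∈ 𝒮x, ⨆ S₂ ∈ 𝒮y, ENNReal.ofReal
    (⨍ x in S₁, ⨍ y in S₂,
      |f (x, y) - (⨍ y' in S₂, f (x, y')) - (⨍ x' in S₁, f (x', y)) + ⨍ z in S₁ ×ˢ S₂, f z|)


/-- The BMO norm of `f` with respect to the basis `𝒮`. -/
def bmoNorm {α : Type*} [MeasureSpace α] (𝒮 : Set (Set α)) (f : α → ℝ) : ℝ≥0∞ :=
  ⨆ S ∈ 𝒮, ENNReal.ofReal (⨍ z in S, |f z - ⨍ w in S, f w|)

lemma key_avg {A B : Type*} [MeasureSpace A] [MeasureSpace B]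
    [SigmaFinite (volume : Measure A)] [SigmaFinite (volume : Measure B)]
    (S₁ : Set A) (S₂ : Set B)
    (h₁0 : 0 < volume S₁) (h₁t : volume S₁ < ⊤)
    (h₂0 : 0 < volume S₂) (h₂t : volume S₂ < ⊤)
    (f : A × B → ℝ)
    (hfi : IntegrableOn f (S₁ ×ˢ S₂))
    (hfx : ∀ x, IntegrableOn (fun y => f (x, y)) S₂)
    (hfy : ∀ y, IntegrableOn (fun x => f (x, y)) S₁) :
    (⨍ x in S₁, ⨍ y in S₂,
      |f (x, y) - (⨍ y' in S₂, f (x, y')) - (⨍ x' in S₁, f (x', y)) + ⨍ z in S₁ ×ˢ S₂, f z|)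
    ≤ 3 * ⨍ z in S₁ ×ˢ S₂, |f z - ⨍ w in S₁ ×ˢ S₂, f w| := by
  set μ := (volume : Measure A).restrict S₁ with hμdef
  set ν := (volume : Measure B).restrict S₂ with hνdef
  set a := (volume S₁).toReal with hadef
  set b := (volume S₂).toReal with hbdef
  have ha0 : 0 < a := ENNReal.toReal_pos h₁0.ne' h₁t.ne
  have hb0 : 0 < b := ENNReal.toReal_pos h₂0.ne' h₂t.ne
  set m := ⨍ z in S₁ ×ˢ S₂, f z with hmdef
  set g : A × B → ℝ := fun z => f z - m with hgdef
  have hvol : (volume : Measure (A × B)).restrict (S₁ ×ˢ S₂) = μ.prod ν := by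
    rw [Measure.volume_eq_prod, ← Measure.prod_restrict]
  have hvolS : volume (S₁ ×ˢ S₂) = volume S₁ * volume S₂ := by
    rw [Measure.volume_eq_prod, Measure.prod_prod]
  have hSt : volume (S₁ ×ˢ S₂) < ⊤ := by
    rw [hvolS]; exact ENNReal.mul_lt_top h₁t h₂t
  have hμuniv : μ univ = volume S₁ := Measure.restrict_apply_univ _
  have hνuniv : ν univ = volume S₂ := Measure.restrict_apply_univ _
  haveI : IsFiniteMeasure μ := ⟨by rw [hμuniv]; exact h₁t⟩
  haveI : IsFiniteMeasure ν := ⟨by rw [hνuniv]; exact h₂t⟩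
  have hgi : Integrable g (μ.prod ν) := by
    have h : IntegrableOn g (S₁ ×ˢ S₂) := hfi.sub (integrableOn_const hSt.ne)
    rwa [IntegrableOn, hvol] at h
  have hgx : ∀ x, Integrable (fun y => g (x, y)) ν :=
    fun x => (hfx x).sub (integrableOn_const h₂t.ne)
  have hgy : ∀ y, Integrable (fun x => g (x, y)) μ :=
    fun y => (hfy y).sub (integrableOn_const h₁t.ne)
  set u : A → ℝ := fun x => b⁻¹ * ∫ y, g (x, y) ∂ν with hudef
  set v : B → ℝ := fun y => a⁻¹ * ∫ x, g (x, y) ∂μ with hvdef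
  -- average identities
  have havg2 : ∀ x, (⨍ y' in S₂, f (x, y')) = u x + m := by
    intro x
    have h1 : ∫ y, f (x, y) ∂ν = (∫ y, g (x, y) ∂ν) + b * m := by
      have he : (fun y => f (x, y)) = fun y => g (x, y) + m := by
        funext y; simp [hgdef]
      rw [he, integral_add (hgx x) (integrable_const m), integral_const, measureReal_def, hνuniv,
        smul_eq_mul]
    rw [setAverage_eq, smul_eq_mul, ← hνdef, measureReal_def, ← hbdef, h1, hudef]
    field_simp
  have havg1 : ∀ y, (⨍ x' in S₁, f (x', y)) = v y + m := by
    intro y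
    have h1 : ∫ x, f (x, y) ∂μ = (∫ x, g (x, y) ∂μ) + a * m := by
      have he : (fun x => f (x, y)) = fun x => g (x, y) + m := by
        funext x; simp [hgdef]
      rw [he, integral_add (hgy y) (integrable_const m), integral_const, measureReal_def, hμuniv,
        smul_eq_mul]
    rw [setAverage_eq, smul_eq_mul, ← hμdef, measureReal_def, ← hadef, h1, hvdef]
    field_simp
  have hpt : ∀ x y, f (x, y) - (⨍ y' in S₂, f (x, y')) - (⨍ x' in S₁, f (x', y)) + m
      = g (x, y) - u x - v y := by
    intro x y; rw [havg2 x, havg1 y]; simp [hgdef]; ring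
  simp only [hμdef, hνdef, hpt]
  -- J
  set J := ∫ z, |g z| ∂(μ.prod ν) with hJdef
  have hJ1 : J = ∫ x, ∫ y, |g (x, y)| ∂ν ∂μ := integral_prod _ hgi.abs
  have hJ2 : J = ∫ y, ∫ x, |g (x, y)| ∂μ ∂ν := integral_prod_symm _ hgi.abs
  have hJnn : 0 ≤ J := integral_nonneg fun z => abs_nonneg _
  -- RHS computation
  have hRHS : (⨍ z in S₁ ×ˢ S₂, |f z - m|) = (a * b)⁻¹ * J := by
    rw [setAverage_eq, smul_eq_mul, measureReal_def, hvolS, ENNReal.toReal_mul, ← hadef, ← hbdef]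
    congr 1
    rw [show (∫ z in S₁ ×ˢ S₂, |f z - m|) = ∫ z, |g z| ∂((volume : Measure (A × B)).restrict (S₁ ×ˢ S₂)) from rfl, hvol]
  -- integrabilities
  have hIx : Integrable (fun x => ∫ y, |g (x, y)| ∂ν) μ := by
    simpa [Real.norm_eq_abs] using hgi.integral_norm_prod_left
  have hIy : Integrable (fun y => ∫ x, |g (x, y)| ∂μ) ν := by
    simpa [Real.norm_eq_abs] using hgi.integral_norm_prod_right
  have hIu : Integrable u μ := hgi.integral_prod_left.const_mul _
  have hIv : Integrable v ν := hgi.integral_prod_right.const_mul _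
  -- pointwise bounds on u, v
  have hub : ∀ x, |u x| ≤ b⁻¹ * ∫ y, |g (x, y)| ∂ν := by
    intro x
    have h1 : |∫ y, g (x, y) ∂ν| ≤ ∫ y, |g (x, y)| ∂ν := by
      simpa [Real.norm_eq_abs] using norm_integral_le_integral_norm (μ := ν) (fun y => g (x, y))
    calc |u x| = b⁻¹ * |∫ y, g (x, y) ∂ν| := by
          rw [hudef]; rw [abs_mul, abs_of_nonneg (inv_nonneg.2 hb0.le)]
    _ ≤ b⁻¹ * ∫ y, |g (x, y)| ∂ν := by
          exact mul_le_mul_of_nonneg_left h1 (inv_nonneg.2 hb0.le)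
  have hvb : ∀ y, |v y| ≤ a⁻¹ * ∫ x, |g (x, y)| ∂μ := by
    intro y
    have h1 : |∫ x, g (x, y) ∂μ| ≤ ∫ x, |g (x, y)| ∂μ := by
      simpa [Real.norm_eq_abs] using norm_integral_le_integral_norm (μ := μ) (fun x => g (x, y))
    calc |v y| = a⁻¹ * |∫ x, g (x, y) ∂μ| := by
          rw [hvdef]; rw [abs_mul, abs_of_nonneg (inv_nonneg.2 ha0.le)]
    _ ≤ a⁻¹ * ∫ x, |g (x, y)| ∂μ := by
          exact mul_le_mul_of_nonneg_left h1 (inv_nonneg.2 ha0.le)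
  -- integrated bounds
  have hIu' : ∫ x, |u x| ∂μ ≤ b⁻¹ * J := by
    calc ∫ x, |u x| ∂μ ≤ ∫ x, b⁻¹ * ∫ y, |g (x, y)| ∂ν ∂μ :=
          integral_mono_of_nonneg (.of_forall fun x => abs_nonneg _)
            (hIx.const_mul _) (.of_forall hub)
    _ = b⁻¹ * ∫ x, ∫ y, |g (x, y)| ∂ν ∂μ := integral_const_mul _ _
    _ = b⁻¹ * J := by rw [← hJ1]
  set Cv := ∫ y, |v y| ∂ν with hCvdef
  have hCv : Cv ≤ a⁻¹ * J := by
    calc Cv ≤ ∫ y, a⁻¹ * ∫ x, |g (x, y)| ∂μ ∂ν :=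
          integral_mono_of_nonneg (.of_forall fun y => abs_nonneg _)
            (hIy.const_mul _) (.of_forall hvb)
    _ = a⁻¹ * ∫ y, ∫ x, |g (x, y)| ∂μ ∂ν := integral_const_mul _ _
    _ = a⁻¹ * J := by rw [← hJ2]
  have hCvnn : 0 ≤ Cv := integral_nonneg fun y => abs_nonneg _
  -- inner inequality
  have hinner : ∀ x, ∫ y, |g (x, y) - u x - v y| ∂ν
      ≤ (∫ y, |g (x, y)| ∂ν) + b * |u x| + Cv := by
    intro x
    have hInt : Integrable (fun y => |g (x, y)| + |u x| + |v y|) ν :=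
      ((hgx x).abs.add (integrable_const _)).add hIv.abs
    calc ∫ y, |g (x, y) - u x - v y| ∂ν
        ≤ ∫ y, (|g (x, y)| + |u x| + |v y|) ∂ν := by
          refine integral_mono_of_nonneg (.of_forall fun y => abs_nonneg _) hInt
            (.of_forall fun y => ?_)
          show |g (x, y) - u x - v y| ≤ |g (x, y)| + |u x| + |v y|
          have h3 : g (x, y) - u x - v y = g (x, y) + (-u x) + (-v y) := by ring
          rw [h3]
          simpa [abs_neg] using abs_add_three (g (x, y)) (-u x) (-v y)
    _ = (∫ y, |g (x, y)| ∂ν) + b * |u x| + Cv := by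
          have A1 : Integrable (fun y => |g (x, y)| + |u x|) ν :=
            (hgx x).abs.add (integrable_const _)
          rw [integral_add A1 hIv.abs,
            integral_add (hgx x).abs (integrable_const _), integral_const, measureReal_def, hνuniv,
            smul_eq_mul, mul_comm]
  -- main estimate
  rw [setAverage_eq, smul_eq_mul, ← hμdef, measureReal_def, ← hadef, hRHS]
  have hstep : ∀ x, (⨍ y in S₂, |g (x, y) - u x - v y|)
      = b⁻¹ * ∫ y, |g (x, y) - u x - v y| ∂ν := by
    intro x; rw [setAverage_eq, smul_eq_mul, ← hνdef, measureReal_def, ← hbdef]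
  simp only [hstep]
  have B1 : Integrable (fun x => (∫ y, |g (x, y)| ∂ν) + b * |u x|) μ :=
    hIx.add ((hIu.abs).const_mul b)
  have B2 : Integrable (fun x => b⁻¹ * ((∫ y, |g (x, y)| ∂ν) + b * |u x| + Cv)) μ :=
    (B1.add (integrable_const _)).const_mul _
  have hmono : ∫ x, b⁻¹ * ∫ y, |g (x, y) - u x - v y| ∂ν ∂μ
      ≤ ∫ x, b⁻¹ * ((∫ y, |g (x, y)| ∂ν) + b * |u x| + Cv) ∂μ := by
    refine integral_mono_of_nonneg
      (.of_forall fun x => mul_nonneg (inv_nonneg.2 hb0.le)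
        (integral_nonneg fun y => abs_nonneg _))
      B2
      (.of_forall fun x => mul_le_mul_of_nonneg_left (hinner x) (inv_nonneg.2 hb0.le))
  have hcomp : ∫ x, b⁻¹ * ((∫ y, |g (x, y)| ∂ν) + b * |u x| + Cv) ∂μ
      = b⁻¹ * (J + b * ∫ x, |u x| ∂μ + a * Cv) := by
    rw [integral_const_mul]
    congr 1
    rw [integral_add B1 (integrable_const _),
      integral_add hIx ((hIu.abs).const_mul b), integral_const, measureReal_def, hμuniv, smul_eq_mul,
      integral_const_mul, ← hJ1]
  calc a⁻¹ * ∫ x, b⁻¹ * ∫ y, |g (x, y) - u x - v y| ∂ν ∂μ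
      ≤ a⁻¹ * (b⁻¹ * (J + b * ∫ x, |u x| ∂μ + a * Cv)) := by
        refine mul_le_mul_of_nonneg_left ?_ (inv_nonneg.2 ha0.le)
        rw [← hcomp]; exact hmono
  _ ≤ a⁻¹ * (b⁻¹ * (J + b * (b⁻¹ * J) + a * (a⁻¹ * J))) := by
        refine mul_le_mul_of_nonneg_left (mul_le_mul_of_nonneg_left ?_ (inv_nonneg.2 hb0.le))
          (inv_nonneg.2 ha0.le)
        gcongr
  _ = 3 * ((a * b)⁻¹ * J) := by
        field_simp
        ring

/-- Let `ℝⁿ = ℝ^{n₁}×ℝ^{n₂}` and let `𝒮` have the strong decomposition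
property with respect to bases `𝒮x, 𝒮y` of shapes. If `f ∈ BMO_𝒮(ℝⁿ)`, then
`f ∈ BMO_{rec,𝒮}(ℝ^{n₁}×ℝ^{n₂})` with `‖f‖_{BMO_{rec,𝒮}} ≤ 3‖f‖_{BMO_𝒮}`. -/
theorem strong_bmo_subset_rec_bmo {n₁ n₂ : ℕ}
    (𝒮 : Set (Set ((Fin n₁ → ℝ) × (Fin n₂ → ℝ))))
    (𝒮x : Set (Set (Fin n₁ → ℝ))) (𝒮y : Set (Set (Fin n₂ → ℝ)))
    (h𝒮 : IsShapeBasis 𝒮) (h𝒮x : IsShapeBasis 𝒮x) (h𝒮y : IsShapeBasis 𝒮y)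
    (hdec : StrongDecomposition2 𝒮 𝒮x 𝒮y)
    (f : (Fin n₁ → ℝ) × (Fin n₂ → ℝ) → ℝ) (hfm : Measurable f)
    (hfi : ∀ S ∈ 𝒮, IntegrableOn f S)
    (hfx : ∀ (x : Fin n₁ → ℝ), ∀ S₂ ∈ 𝒮y, IntegrableOn (fun y => f (x, y)) S₂)
    (hfy : ∀ (y : Fin n₂ → ℝ), ∀ S₁ ∈ 𝒮x, IntegrableOn (fun x => f (x, y)) S₁)
    (hf : bmoNorm 𝒮 f < ⊤) :
    recBmoNorm 𝒮x 𝒮y f < ⊤ ∧ recBmoNorm 𝒮x 𝒮y f ≤ 3 * bmoNorm 𝒮 f := by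
  have hle : recBmoNorm 𝒮x 𝒮y f ≤ 3 * bmoNorm 𝒮 f := by
    rw [recBmoNorm]
    refine iSup₂_le fun S₁ hS₁ => iSup₂_le fun S₂ hS₂ => ?_
    have hS : S₁ ×ˢ S₂ ∈ 𝒮 := hdec.2 S₁ hS₁ S₂ hS₂
    obtain ⟨hO1, h10, h1t⟩ := h𝒮x.1 S₁ hS₁
    obtain ⟨hO2, h20, h2t⟩ := h𝒮y.1 S₂ hS₂
    have hk := key_avg S₁ S₂ h10 h1t h20 h2t f (hfi _ hS)
      (fun x => hfx x S₂ hS₂) (fun y => hfy y S₁ hS₁)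
    have hM : ENNReal.ofReal (⨍ z in S₁ ×ˢ S₂, |f z - ⨍ w in S₁ ×ˢ S₂, f w|)
        ≤ bmoNorm 𝒮 f := by
      rw [bmoNorm]
      exact le_iSup₂ (f := fun S (_ : S ∈ 𝒮) =>
        ENNReal.ofReal (⨍ z in S, |f z - ⨍ w in S, f w|)) (S₁ ×ˢ S₂) hS
    calc ENNReal.ofReal (⨍ x in S₁, ⨍ y in S₂,
          |f (x, y) - (⨍ y' in S₂, f (x, y')) - (⨍ x' in S₁, f (x', y)) + ⨍ z in S₁ ×ˢ S₂, f z|)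
        ≤ ENNReal.ofReal (3 * ⨍ z in S₁ ×ˢ S₂, |f z - ⨍ w in S₁ ×ˢ S₂, f w|) :=
          ENNReal.ofReal_le_ofReal hk
    _ = 3 * ENNReal.ofReal (⨍ z in S₁ ×ˢ S₂, |f z - ⨍ w in S₁ ×ˢ S₂, f w|) := by
          rw [ENNReal.ofReal_mul (by norm_num)]
          norm_num
    _ ≤ 3 * bmoNorm 𝒮 f := mul_le_mul_right hM 3
  exact ⟨lt_of_le_of_lt hle (ENNReal.mul_lt_top (by norm_num) hf), hle⟩
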